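/- Let 𝓟 = (p₁,…,pₙ) be a point in ℝⁿ and Q₁,…,Q_m points in ℝⁿ (the values of the random vector on the constituents). Then 𝓟 lies in the convex hull of {Q₁,…,Q_m} if and only if for every choice of real stakes s₁,…,sₙ, setting g_h = Σᵢ sᵢ(q_{hi} − pᵢ), it holds that min_h g_h ≤ 0 ≤ max_h g_h. -/

import Mathlib

open scoped BigOperators

lemma clm_eq_sum_coords {n : ℕ} (f : (Fin n → ℝ) →L[ℝ] ℝ) (x : Fin n → ℝ) :
    f x = ∑ i, x i * f (Pi.single i 1) := by
  have hx : x = ∑ i, x i • (Pi.single i (1 : ℝ) : Fin n → ℝ) := by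
    funext j
    simp [Finset.sum_apply, Pi.single_apply, Finset.sum_ite_eq]
  conv_lhs => rw [hx]
  rw [map_sum]
  simp [map_smul, smul_eq_mul]

/-- Geometric characterization of coherence (Gale alternative / separating
hyperplane): a point `𝓟 = (p₁,…,pₙ)` lies in the convex hull of the points
`Q₁,…,Q_m` iff for every choice of stakes `s₁,…,sₙ`, setting
`g_h = Σᵢ sᵢ(q_{hi} − pᵢ)`, one has `min_h g_h ≤ 0 ≤ max_h g_h`. -/
theorem mem_convexHull_iff_gain {n m : ℕ} (hm : 0 < m)
    (p : Fin n → ℝ) (Q : Fin m → Fin n → ℝ) :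
    p ∈ convexHull ℝ (Set.range Q) ↔
      ∀ s : Fin n → ℝ,
        (∃ h : Fin m, ∑ i, s i * (Q h i - p i) ≤ 0) ∧
        (∃ h : Fin m, 0 ≤ ∑ i, s i * (Q h i - p i)) := by
  constructor
  · intro hp s
    rw [convexHull_eq] at hp
    obtain ⟨ι, t, w, z, hw0, hw1, hz, hsum⟩ := hp
    have hcoord : ∀ i, (∑ j ∈ t, w j * z j i) = p i := by
      intro i
      have := Finset.centerMass_eq_of_sum_1 t z hw1
      rw [this] at hsum
      have := congrFun hsum i
      simpa [Finset.sum_apply] using this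
    set g : ι → ℝ := fun j => ∑ i, s i * (z j i - p i) with hg
    have key : ∑ j ∈ t, w j * g j = 0 := by
      calc ∑ j ∈ t, w j * g j
          = ∑ j ∈ t, ∑ i, (s i * (w j * z j i) - s i * (w j * p i)) := by
            refine Finset.sum_congr rfl fun j _ => ?_
            rw [hg]; simp only
            rw [Finset.mul_sum]
            exact Finset.sum_congr rfl fun i _ => by ring
        _ = ∑ i, (s i * (∑ j ∈ t, w j * z j i) - s i * ((∑ j ∈ t, w j) * p i)) := by
            rw [Finset.sum_comm]
            refine Finset.sum_congr rfl fun i _ => ?_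
            rw [Finset.sum_sub_distrib, ← Finset.mul_sum, ← Finset.mul_sum,
              ← Finset.sum_mul]
        _ = 0 := by
            rw [hw1]
            refine Finset.sum_eq_zero fun i _ => ?_
            rw [hcoord i]; ring
    have hwt : ∃ j ∈ t, 0 < w j := by
      by_contra hc
      push_neg at hc
      have : ∑ j ∈ t, w j = 0 :=
        Finset.sum_eq_zero fun j hj => le_antisymm (hc j hj) (hw0 j hj)
      rw [hw1] at this; norm_num at this
    constructor
    · by_contra hc
      push_neg at hc
      have hgpos : ∀ j ∈ t, 0 < g j := by
        intro j hj
        obtain ⟨h, hhz⟩ := hz j hj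
        have := hc h
        rw [hg]; simp only
        rw [← hhz]; exact this
      obtain ⟨j₀, hj₀, hwj₀⟩ := hwt
      have : 0 < ∑ j ∈ t, w j * g j :=
        Finset.sum_pos' (fun j hj => mul_nonneg (hw0 j hj) (hgpos j hj).le)
          ⟨j₀, hj₀, mul_pos hwj₀ (hgpos j₀ hj₀)⟩
      rw [key] at this; norm_num at this
    · by_contra hc
      push_neg at hc
      have hgneg : ∀ j ∈ t, g j < 0 := by
        intro j hj
        obtain ⟨h, hhz⟩ := hz j hj
        have := hc h
        rw [hg]; simp only
        rw [← hhz]; exact this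
      obtain ⟨j₀, hj₀, hwj₀⟩ := hwt
      have hpos : 0 < ∑ j ∈ t, w j * (-g j) :=
        Finset.sum_pos' (fun j hj => mul_nonneg (hw0 j hj) (neg_nonneg.2 (hgneg j hj).le))
          ⟨j₀, hj₀, mul_pos hwj₀ (neg_pos.2 (hgneg j₀ hj₀))⟩
      have hneg : ∑ j ∈ t, w j * (-g j) = -∑ j ∈ t, w j * g j := by
        simp [mul_neg]
      rw [hneg, key] at hpos; norm_num at hpos
  · intro hs
    by_contra hp
    have hcl : IsClosed (convexHull ℝ (Set.range Q)) :=
      ((Set.finite_range Q).isCompact_convexHull (𝕜 := ℝ)).isClosed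
    obtain ⟨f, u, hfp, hfb⟩ := geometric_hahn_banach_point_closed
      (convex_convexHull ℝ _) hcl hp
    set s : Fin n → ℝ := fun i => f (Pi.single i 1) with hsdef
    obtain ⟨⟨h, hle⟩, -⟩ := hs s
    have hQ : u < f (Q h) := hfb _ (subset_convexHull ℝ _ ⟨h, rfl⟩)
    have : ∑ i, s i * (Q h i - p i) = f (Q h) - f p := by
      rw [clm_eq_sum_coords f (Q h), clm_eq_sum_coords f p, ← Finset.sum_sub_distrib]
      exact Finset.sum_congr rfl fun i _ => by rw [hsdef]; ring
    rw [this] at hle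
    linarith
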